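/- Let H be a β-acyclic hypergraph with a β-elimination ordering ≤ of V(H) and induced lexicographic ordering ≤_H on hyperedges. Let e, f ∈ H with e ≤_H f, and let x, y ∈ V(H) with x ≤ y. If V(H_e^x) ∩ V(H_f^y) ∩ [≤ x] ≠ ∅, then H_e^x ⊆ H_f^y. -/

import Mathlib

variable {α : Type*} [LinearOrder α]

/-- The vertex set `V(H)` of a hypergraph `H`: the union of its hyperedges. -/
def verts (H : Finset (Finset α)) : Finset α := H.sup id

/-- The linear order on `α` is a `β`-elimination ordering of `H`: for every vertex `x`,
the set `{e ∩ [≥ x] | e ∈ H, x ∈ e}` is linearly ordered by inclusion (so that `H` is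
`β`-acyclic, witnessed by this ordering). -/
def IsBetaElimOrder (H : Finset (Finset α)) : Prop :=
  ∀ x : α, ∀ e ∈ H, ∀ f ∈ H, x ∈ e → x ∈ f →
    e.filter (x ≤ ·) ⊆ f.filter (x ≤ ·) ∨ f.filter (x ≤ ·) ⊆ e.filter (x ≤ ·)

/-- The induced lexicographic ordering `≤_H` on hyperedges:
`e ≤_H f` iff `e = f` or `min((e \ f) ∪ (f \ e)) ∈ e`. -/
def edgeLE (e f : Finset α) : Prop :=
  e = f ∨ ∃ m ∈ e, ((e \ f) ∪ (f \ e)).min = (m : WithTop α)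

/-- One step of a walk in `H` going only through hyperedges `≤_H e` and vertices `≤ x`. -/
def StepBelow (H : Finset (Finset α)) (e : Finset α) (x : α) (g h : Finset α) : Prop :=
  g ∈ H ∧ h ∈ H ∧ edgeLE g e ∧ edgeLE h e ∧ ∃ v ∈ g ∩ h, v ≤ x

open Classical in
/-- `H_e^x`: the sub-hypergraph of `H` formed by `e` together with the hyperedges `f ∈ H`
connected to `e` by a walk going only through hyperedges `≤_H e` and vertices `≤ x`. -/
noncomputable def Hex (H : Finset (Finset α)) (e : Finset α) (x : α) : Finset (Finset α) :=
  H.filter fun f => edgeLE f e ∧ Relation.ReflTransGen (StepBelow H e x) f e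

private lemma min_spec {s : Finset α} {m : α} (h : s.min = (m : WithTop α)) :
    m ∈ s ∧ ∀ k ∈ s, m ≤ k := by
  refine ⟨Finset.mem_of_min h, fun k hk => ?_⟩
  have := Finset.min_le hk
  rw [h] at this
  exact WithTop.coe_le_coe.mp this

/-- Transitivity of the induced lexicographic ordering. -/
lemma edgeLE_trans {e f g : Finset α} (h1 : edgeLE e f) (h2 : edgeLE f g) : edgeLE e g := by
  rcases h1 with rfl | ⟨m1, hm1e, h1⟩
  · exact h2
  rcases h2 with rfl | ⟨m2, hm2f, h2⟩
  · exact Or.inr ⟨m1, hm1e, h1⟩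
  obtain ⟨hm1mem, hm1min⟩ := min_spec h1
  obtain ⟨hm2mem, hm2min⟩ := min_spec h2
  have hm1f : m1 ∉ f := by
    rcases Finset.mem_union.mp hm1mem with h | h
    · exact (Finset.mem_sdiff.mp h).2
    · exact absurd hm1e (Finset.mem_sdiff.mp h).2
  have hm2g : m2 ∉ g := by
    rcases Finset.mem_union.mp hm2mem with h | h
    · exact (Finset.mem_sdiff.mp h).2
    · exact absurd hm2f (Finset.mem_sdiff.mp h).2
  have heg : e ≠ g := by
    rintro rfl
    have ha : m2 ≤ m1 := hm2min m1 (Finset.mem_union_right _ (Finset.mem_sdiff.mpr ⟨hm1e, hm1f⟩))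
    have hb : m1 ≤ m2 := hm1min m2 (Finset.mem_union_right _ (Finset.mem_sdiff.mpr ⟨hm2f, hm2g⟩))
    exact hm2g (le_antisymm hb ha ▸ hm1e)
  have hS : ((e \ g) ∪ (g \ e)).Nonempty := by
    rw [Finset.nonempty_iff_ne_empty]
    intro h
    obtain ⟨h1', h2'⟩ := Finset.union_eq_empty.mp h
    exact heg (Finset.Subset.antisymm (Finset.sdiff_eq_empty_iff_subset.mp h1')
      (Finset.sdiff_eq_empty_iff_subset.mp h2'))
  obtain ⟨m3, hm3⟩ := Finset.min_of_nonempty hS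
  obtain ⟨hm3mem, hm3min⟩ := min_spec hm3
  refine Or.inr ⟨m3, ?_, hm3⟩
  rcases Finset.mem_union.mp hm3mem with h | h
  · exact (Finset.mem_sdiff.mp h).1
  obtain ⟨hm3g, hm3e⟩ := Finset.mem_sdiff.mp h
  exfalso
  by_cases hm3f : m3 ∈ f
  · -- m3 ∈ f \ e, so m1 < m3
    have h13 : m1 < m3 := lt_of_le_of_ne
      (hm1min m3 (Finset.mem_union_right _ (Finset.mem_sdiff.mpr ⟨hm3f, hm3e⟩)))
      (fun h => hm3e (h ▸ hm1e))
    by_cases hm1g : m1 ∈ g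
    · have h21 : m2 ≤ m1 :=
        hm2min m1 (Finset.mem_union_right _ (Finset.mem_sdiff.mpr ⟨hm1g, hm1f⟩))
      by_cases hm2e : m2 ∈ e
      · have h32 : m3 ≤ m2 :=
          hm3min m2 (Finset.mem_union_left _ (Finset.mem_sdiff.mpr ⟨hm2e, hm2g⟩))
        exact absurd ((h32.trans h21).trans_lt h13) (lt_irrefl m3)
      · have h12 : m1 ≤ m2 :=
          hm1min m2 (Finset.mem_union_right _ (Finset.mem_sdiff.mpr ⟨hm2f, hm2e⟩))
        exact hm2e (le_antisymm h12 h21 ▸ hm1e)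
    · have h31 : m3 ≤ m1 :=
        hm3min m1 (Finset.mem_union_left _ (Finset.mem_sdiff.mpr ⟨hm1e, hm1g⟩))
      exact absurd (h31.trans_lt h13) (lt_irrefl m3)
  · -- m3 ∈ g \ f, so m2 < m3
    have h23 : m2 < m3 := lt_of_le_of_ne
      (hm2min m3 (Finset.mem_union_right _ (Finset.mem_sdiff.mpr ⟨hm3g, hm3f⟩)))
      (fun h => hm3f (h ▸ hm2f))
    by_cases hm2e : m2 ∈ e
    · have h32 : m3 ≤ m2 :=
        hm3min m2 (Finset.mem_union_left _ (Finset.mem_sdiff.mpr ⟨hm2e, hm2g⟩))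
      exact absurd (h32.trans_lt h23) (lt_irrefl m3)
    · have h12 : m1 ≤ m2 :=
        hm1min m2 (Finset.mem_union_right _ (Finset.mem_sdiff.mpr ⟨hm2f, hm2e⟩))
      by_cases hm1g : m1 ∈ g
      · have h21 : m2 ≤ m1 :=
          hm2min m1 (Finset.mem_union_right _ (Finset.mem_sdiff.mpr ⟨hm1g, hm1f⟩))
        exact hm2e (le_antisymm h12 h21 ▸ hm1e)
      · have h31 : m3 ≤ m1 :=
          hm3min m1 (Finset.mem_union_left _ (Finset.mem_sdiff.mpr ⟨hm1e, hm1g⟩))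
        exact absurd ((h31.trans h12).trans_lt h23) (lt_irrefl m3)

lemma stepBelow_symm (H : Finset (Finset α)) (e : Finset α) (x : α) :
    Symmetric (StepBelow H e x) := by
  rintro g h ⟨h1, h2, h3, h4, v, hv, hvx⟩
  exact ⟨h2, h1, h4, h3, v, by rwa [Finset.inter_comm], hvx⟩

lemma stepBelow_mono {H : Finset (Finset α)} {e f : Finset α} {x y : α}
    (hef : edgeLE e f) (hxy : x ≤ y) {g h : Finset α} (hs : StepBelow H e x g h) :
    StepBelow H f y g h := by
  obtain ⟨h1, h2, h3, h4, v, hv, hvx⟩ := hs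
  exact ⟨h1, h2, edgeLE_trans h3 hef, edgeLE_trans h4 hef, v, hv, hvx.trans hxy⟩

/-- **Lemma (Lemma 2 in Capelli'17).** For a `β`-acyclic hypergraph `H`, if `e ≤_H f`,
`x ≤ y` and `V(H_e^x) ∩ V(H_f^y) ∩ [≤ x] ≠ ∅`, then `H_e^x ⊆ H_f^y`. -/
theorem Hex_subset_Hex (H : Finset (Finset α)) (hβ : IsBetaElimOrder H)
    (e f : Finset α) (he : e ∈ H) (hf : f ∈ H) (hef : edgeLE e f)
    (x y : α) (hx : x ∈ verts H) (hy : y ∈ verts H) (hxy : x ≤ y)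
    (hne : (verts (Hex H e x) ∩ verts (Hex H f y) ∩ (verts H).filter (· ≤ x)).Nonempty) :
    Hex H e x ⊆ Hex H f y := by
  classical
  obtain ⟨v, hv⟩ := hne
  simp only [Finset.mem_inter, Finset.mem_filter] at hv
  obtain ⟨⟨hv1, hv2⟩, _, hvx⟩ := hv
  -- extract witnesses from verts memberships
  rw [verts, Finset.mem_sup] at hv1 hv2
  obtain ⟨g1, hg1, hvg1⟩ := hv1
  obtain ⟨g2, hg2, hvg2⟩ := hv2
  simp only [Hex, Finset.mem_filter] at hg1 hg2
  obtain ⟨hg1H, hg1le, hg1walk⟩ := hg1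
  obtain ⟨hg2H, hg2le, hg2walk⟩ := hg2
  simp only [id] at hvg1 hvg2
  -- walk from e to f under StepBelow H f y
  have hwef : Relation.ReflTransGen (StepBelow H f y) e f := by
    have w1 : Relation.ReflTransGen (StepBelow H f y) g1 e :=
      Relation.ReflTransGen.mono (fun a b hab => stepBelow_mono hef hxy hab) _ _ hg1walk
    have w1' : Relation.ReflTransGen (StepBelow H f y) e g1 :=
      (by haveI : Std.Symm (StepBelow H f y) := ⟨fun a b h => stepBelow_symm H f y h⟩; exact Std.Symm.symm _ _ w1)
    have step : StepBelow H f y g1 g2 :=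
      ⟨hg1H, hg2H, edgeLE_trans hg1le hef, hg2le, v, Finset.mem_inter.mpr ⟨hvg1, hvg2⟩,
        hvx.trans hxy⟩
    exact (w1'.tail step).trans hg2walk
  intro g hg
  simp only [Hex, Finset.mem_filter] at hg ⊢
  obtain ⟨hgH, hgle, hgwalk⟩ := hg
  refine ⟨hgH, edgeLE_trans hgle hef, ?_⟩
  exact (Relation.ReflTransGen.mono (fun a b hab => stepBelow_mono hef hxy hab) _ _ hgwalk).trans hwef
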